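/- arXiv:1812.09736 — 2 statements merged into one kernel-verified Lean document; each statement's English description precedes it below -/
import Mathlib

section
/- With the notation of the paper over A = K[x_{i,j}, y_{i,j}, z_{i,j,k}] (char K ≠ 2), let d_2 be the explicit 5×6 matrix and d_3 the 6×2 matrix with rows (b, 2a), (−2c, −b), (−v_1, −u_1), (v_2, u_2), (v_3, u_3), (−v_4, −u_4). Then the matrix product d_2 · d_3 is the zero 5×2 matrix. -/
noncomputable section
open MvPolynomial Matrix

/-- The polynomial ring in 16 variables. -/
abbrev PA (K : Type*) [Field K] := MvPolynomial (Fin 16) K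

variable {K : Type*} [Field K]

def x12 : PA K := X 0
def x13 : PA K := X 1
def x14 : PA K := X 2
def x23 : PA K := X 3
def x24 : PA K := X 4
def x34 : PA K := X 5
def y12 : PA K := X 6
def y13 : PA K := X 7
def y14 : PA K := X 8
def y23 : PA K := X 9
def y24 : PA K := X 10
def y34 : PA K := X 11
def z123 : PA K := X 12
def z124 : PA K := X 13
def z134 : PA K := X 14
def z234 : PA K := X 15

/-- `Dl xij yij xkl ykl` is the 2x2 minor Delta(ij,kl) = x_ij*y_kl - x_kl*y_ij. -/
def Dl (p q r s : PA K) : PA K := p * s - r * q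

def del1 : PA K := Dl x12 y12 x34 y34
def del2 : PA K := Dl x13 y13 x24 y24
def del3 : PA K := Dl x14 y14 x23 y23

/-- The cubic u_{1,2,3}. -/
def u123 : PA K :=
  -2*z234 * Dl x12 y12 x13 y13 + 2*z134 * Dl x12 y12 x23 y23
    - 2*z124 * Dl x13 y13 x23 y23 + z123 * (del2 - del1 + del3)

/-- The cubic u_{1,2,4}. -/
def u124 : PA K :=
  2*z234 * Dl x12 y12 x14 y14 - 2*z134 * Dl x12 y12 x24 y24
    + z124 * (del1 + del2 + del3) - 2*z123 * Dl x14 y14 x24 y24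

/-- The cubic u_{1,3,4}. -/
def u134 : PA K :=
  2*z234 * Dl x13 y13 x14 y14 + z134 * (-del1 - del2 + del3)
    + 2*z124 * Dl x13 y13 x34 y34 - 2*z123 * Dl x14 y14 x34 y34

/-- The cubic u_{2,3,4}. -/
def u234 : PA K :=
  z234 * (-del1 - del2 - del3) - 2*z134 * Dl x23 y23 x24 y24
    + 2*z124 * Dl x23 y23 x34 y34 - 2*z123 * Dl x24 y24 x34 y34

def pa : PA K := x12*x34 - x13*x24 + x14*x23
def pb : PA K := x12*y34 - x13*y24 + x14*y23 + x34*y12 - x24*y13 + x23*y14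
def pc : PA K := y12*y34 - y13*y24 + y14*y23

/-- The quartic u = b^2 - 4ac. -/
def uQ : PA K := pb^2 - 4*pa*pc

/-- u_1 = sum over i # 1 of (-1)^i x_{i,1} z_hat-i (skew convention x_{i,j} = -x_{j,i}). -/
def u1 : PA K := -x12*z134 + x13*z124 - x14*z123
def u2 : PA K := -x12*z234 + x23*z124 - x24*z123
def u3 : PA K := -x13*z234 + x23*z134 - x34*z123
def u4 : PA K := -x14*z234 + x24*z134 - x34*z124
def v1 : PA K := -y12*z134 + y13*z124 - y14*z123
def v2 : PA K := -y12*z234 + y23*z124 - y24*z123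
def v3 : PA K := -y13*z234 + y23*z134 - y34*z123
def v4 : PA K := -y14*z234 + y24*z134 - y34*z124
/-- The 5x6 matrix d2. -/
def d2 : Matrix (Fin 5) (Fin 6) (PA K) := Matrix.of ![
    ![v1, u1, -del1 + del2 - del3, 2 * Dl x13 y13 x14 y14, -2 * Dl x12 y12 x14 y14, -2 * Dl x12 y12 x13 y13],
    ![-v2, -u2, -2 * Dl x23 y23 x24 y24, -del1 - del2 + del3, 2 * Dl x12 y12 x24 y24, 2 * Dl x12 y12 x23 y23],
    ![v3, u3, 2 * Dl x23 y23 x34 y34, 2 * Dl x13 y13 x34 y34, -del1 - del2 - del3, -2 * Dl x13 y13 x23 y23],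
    ![v4, u4, 2 * Dl x24 y24 x34 y34, 2 * Dl x14 y14 x34 y34, -2 * Dl x14 y14 x24 y24, del1 - del2 - del3],
    ![0, 0, -z234, -z134, z124, z123]]

/-- The 6x2 matrix d3. -/
def d3 : Matrix (Fin 6) (Fin 2) (PA K) := Matrix.of ![
    ![pb, 2*pa], ![-2*pc, -pb], ![-v1, -u1], ![v2, u2], ![v3, u3], ![-v4, -u4]]

lemma cons_val_five' {α : Type*} (a b c d e f : α) : ![a,b,c,d,e,f] 5 = f := rfl

set_option maxHeartbeats 1000000 in
private lemma entry_00 : (d2 * d3 : Matrix (Fin 5) (Fin 2) (PA K)) 0 0 = 0 := by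
  rw [show ∀ i j, (d2 * d3 : Matrix (Fin 5) (Fin 2) (PA K)) i j = ∑ k, d2 i k * d3 k j from
    fun _ _ => rfl, Fin.sum_univ_six]
  simp only [d2, d3, Matrix.of_apply, Matrix.cons_val_zero, Matrix.cons_val_one,
    Matrix.head_cons, Matrix.cons_val_two, Matrix.cons_val_three, Matrix.cons_val_four,
    cons_val_five', Matrix.tail_cons]
  simp only [pa, pb, pc, u1, u2, u3, u4, v1, v2, v3, v4, del1, del2, del3, Dl]
  ring

set_option maxHeartbeats 1000000 in
private lemma entry_01 : (d2 * d3 : Matrix (Fin 5) (Fin 2) (PA K)) 0 1 = 0 := by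
  rw [show ∀ i j, (d2 * d3 : Matrix (Fin 5) (Fin 2) (PA K)) i j = ∑ k, d2 i k * d3 k j from
    fun _ _ => rfl, Fin.sum_univ_six]
  simp only [d2, d3, Matrix.of_apply, Matrix.cons_val_zero, Matrix.cons_val_one,
    Matrix.head_cons, Matrix.cons_val_two, Matrix.cons_val_three, Matrix.cons_val_four,
    cons_val_five', Matrix.tail_cons]
  simp only [pa, pb, pc, u1, u2, u3, u4, v1, v2, v3, v4, del1, del2, del3, Dl]
  ring

set_option maxHeartbeats 1000000 in
private lemma entry_10 : (d2 * d3 : Matrix (Fin 5) (Fin 2) (PA K)) 1 0 = 0 := by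
  rw [show ∀ i j, (d2 * d3 : Matrix (Fin 5) (Fin 2) (PA K)) i j = ∑ k, d2 i k * d3 k j from
    fun _ _ => rfl, Fin.sum_univ_six]
  simp only [d2, d3, Matrix.of_apply, Matrix.cons_val_zero, Matrix.cons_val_one,
    Matrix.head_cons, Matrix.cons_val_two, Matrix.cons_val_three, Matrix.cons_val_four,
    cons_val_five', Matrix.tail_cons]
  simp only [pa, pb, pc, u1, u2, u3, u4, v1, v2, v3, v4, del1, del2, del3, Dl]
  ring

set_option maxHeartbeats 1000000 in
private lemma entry_11 : (d2 * d3 : Matrix (Fin 5) (Fin 2) (PA K)) 1 1 = 0 := by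
  rw [show ∀ i j, (d2 * d3 : Matrix (Fin 5) (Fin 2) (PA K)) i j = ∑ k, d2 i k * d3 k j from
    fun _ _ => rfl, Fin.sum_univ_six]
  simp only [d2, d3, Matrix.of_apply, Matrix.cons_val_zero, Matrix.cons_val_one,
    Matrix.head_cons, Matrix.cons_val_two, Matrix.cons_val_three, Matrix.cons_val_four,
    cons_val_five', Matrix.tail_cons]
  simp only [pa, pb, pc, u1, u2, u3, u4, v1, v2, v3, v4, del1, del2, del3, Dl]
  ring

set_option maxHeartbeats 1000000 in
private lemma entry_20 : (d2 * d3 : Matrix (Fin 5) (Fin 2) (PA K)) 2 0 = 0 := by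
  rw [show ∀ i j, (d2 * d3 : Matrix (Fin 5) (Fin 2) (PA K)) i j = ∑ k, d2 i k * d3 k j from
    fun _ _ => rfl, Fin.sum_univ_six]
  simp only [d2, d3, Matrix.of_apply, Matrix.cons_val_zero, Matrix.cons_val_one,
    Matrix.head_cons, Matrix.cons_val_two, Matrix.cons_val_three, Matrix.cons_val_four,
    cons_val_five', Matrix.tail_cons]
  simp only [pa, pb, pc, u1, u2, u3, u4, v1, v2, v3, v4, del1, del2, del3, Dl]
  ring

set_option maxHeartbeats 1000000 in
private lemma entry_21 : (d2 * d3 : Matrix (Fin 5) (Fin 2) (PA K)) 2 1 = 0 := by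
  rw [show ∀ i j, (d2 * d3 : Matrix (Fin 5) (Fin 2) (PA K)) i j = ∑ k, d2 i k * d3 k j from
    fun _ _ => rfl, Fin.sum_univ_six]
  simp only [d2, d3, Matrix.of_apply, Matrix.cons_val_zero, Matrix.cons_val_one,
    Matrix.head_cons, Matrix.cons_val_two, Matrix.cons_val_three, Matrix.cons_val_four,
    cons_val_five', Matrix.tail_cons]
  simp only [pa, pb, pc, u1, u2, u3, u4, v1, v2, v3, v4, del1, del2, del3, Dl]
  ring

set_option maxHeartbeats 1000000 in
private lemma entry_30 : (d2 * d3 : Matrix (Fin 5) (Fin 2) (PA K)) 3 0 = 0 := by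
  rw [show ∀ i j, (d2 * d3 : Matrix (Fin 5) (Fin 2) (PA K)) i j = ∑ k, d2 i k * d3 k j from
    fun _ _ => rfl, Fin.sum_univ_six]
  simp only [d2, d3, Matrix.of_apply, Matrix.cons_val_zero, Matrix.cons_val_one,
    Matrix.head_cons, Matrix.cons_val_two, Matrix.cons_val_three, Matrix.cons_val_four,
    cons_val_five', Matrix.tail_cons]
  simp only [pa, pb, pc, u1, u2, u3, u4, v1, v2, v3, v4, del1, del2, del3, Dl]
  ring

set_option maxHeartbeats 1000000 in
private lemma entry_31 : (d2 * d3 : Matrix (Fin 5) (Fin 2) (PA K)) 3 1 = 0 := by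
  rw [show ∀ i j, (d2 * d3 : Matrix (Fin 5) (Fin 2) (PA K)) i j = ∑ k, d2 i k * d3 k j from
    fun _ _ => rfl, Fin.sum_univ_six]
  simp only [d2, d3, Matrix.of_apply, Matrix.cons_val_zero, Matrix.cons_val_one,
    Matrix.head_cons, Matrix.cons_val_two, Matrix.cons_val_three, Matrix.cons_val_four,
    cons_val_five', Matrix.tail_cons]
  simp only [pa, pb, pc, u1, u2, u3, u4, v1, v2, v3, v4, del1, del2, del3, Dl]
  ring

set_option maxHeartbeats 1000000 in
private lemma entry_40 : (d2 * d3 : Matrix (Fin 5) (Fin 2) (PA K)) 4 0 = 0 := by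
  rw [show ∀ i j, (d2 * d3 : Matrix (Fin 5) (Fin 2) (PA K)) i j = ∑ k, d2 i k * d3 k j from
    fun _ _ => rfl, Fin.sum_univ_six]
  simp only [d2, d3, Matrix.of_apply, Matrix.cons_val_zero, Matrix.cons_val_one,
    Matrix.head_cons, Matrix.cons_val_two, Matrix.cons_val_three, Matrix.cons_val_four,
    cons_val_five', Matrix.tail_cons]
  simp only [pa, pb, pc, u1, u2, u3, u4, v1, v2, v3, v4, del1, del2, del3, Dl]
  ring

set_option maxHeartbeats 1000000 in
private lemma entry_41 : (d2 * d3 : Matrix (Fin 5) (Fin 2) (PA K)) 4 1 = 0 := by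
  rw [show ∀ i j, (d2 * d3 : Matrix (Fin 5) (Fin 2) (PA K)) i j = ∑ k, d2 i k * d3 k j from
    fun _ _ => rfl, Fin.sum_univ_six]
  simp only [d2, d3, Matrix.of_apply, Matrix.cons_val_zero, Matrix.cons_val_one,
    Matrix.head_cons, Matrix.cons_val_two, Matrix.cons_val_three, Matrix.cons_val_four,
    cons_val_five', Matrix.tail_cons]
  simp only [pa, pb, pc, u1, u2, u3, u4, v1, v2, v3, v4, del1, del2, del3, Dl]
  ring

/-- d2 * d3 = 0. -/
theorem d2_mul_d3 (hchar : ringChar K ≠ 2) :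
    d2 * d3 = (0 : Matrix (Fin 5) (Fin 2) (PA K)) := by
  refine Matrix.ext fun i j => ?_
  fin_cases i <;> fin_cases j
  exacts [entry_00, entry_01, entry_10, entry_11, entry_20, entry_21,
    entry_30, entry_31, entry_40, entry_41]
end
end

section
/- Let P_1 ⊆ A be the ideal generated by z_{1,3,4}, y_{1,4}z_{1,2,3} − y_{1,3}z_{1,2,4}, x_{1,4}z_{1,2,3} − x_{1,3}z_{1,2,4}, and Δ(14,13) = x_{1,4}y_{1,3} − x_{1,3}y_{1,4}. Then A/P_1 has a free resolution of length 3 whose middle differential d_2^{P_1} is the explicit 4×5 matrix given in the paper; in particular, the composite d_1^{P_1} · d_2^{P_1} = 0, where d_1^{P_1} = [z_{1,3,4}, y_{1,4}z_{1,2,3} − y_{1,3}z_{1,2,4}, x_{1,4}z_{1,2,3} − x_{1,3}z_{1,2,4}, Δ(14,13)]. -/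
set_option maxHeartbeats 1600000


noncomputable section
open MvPolynomial Matrix

variable {K : Type*} [Field K]

/-- The ideal P1. -/
def P1 : Ideal (PA K) := Ideal.span
  {z134, y14*z123 - y13*z124, x14*z123 - x13*z124, Dl x14 y14 x13 y13}

/-- The 1x4 matrix d1^{P1}. -/
def d1P : Matrix (Fin 1) (Fin 4) (PA K) := Matrix.of
  ![![z134, y14*z123 - y13*z124, x14*z123 - x13*z124, Dl x14 y14 x13 y13]]

/-- The 4x5 matrix d2^{P1}. -/
def d2P : Matrix (Fin 4) (Fin 5) (PA K) := Matrix.of ![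
    ![0, 0, y14*z123 - y13*z124, x14*z123 - x13*z124, Dl x14 y14 x13 y13],
    ![x14, x13, -z134, 0, 0],
    ![-y14, -y13, 0, -z134, 0],
    ![z124, z123, 0, 0, -z134]]

namespace P1Aux

/-- Irreducibility of a primitive linear polynomial. -/
lemma irreducible_linear {R : Type*} [CommRing R] [IsDomain R] {u v : R} (hu : u ≠ 0)
    (hdvd : ∀ c : R, c ∣ u → c ∣ v → IsUnit c) :
    Irreducible (Polynomial.C u * Polynomial.X + Polynomial.C v) := by
  set f := Polynomial.C u * Polynomial.X + Polynomial.C v with hf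
  have hdeg : f.natDegree = 1 := Polynomial.natDegree_linear hu
  have hf0 : f ≠ 0 := fun h => by simp [h] at hdeg
  have key : ∀ g h : Polynomial R, f = g * h → g.natDegree = 0 → IsUnit g := by
    intro g h hgh hg
    obtain ⟨c, rfl⟩ := Polynomial.natDegree_eq_zero.mp hg
    have hu' : u = c * h.coeff 1 := by
      have := congrArg (fun p => Polynomial.coeff p 1) hgh
      simpa [hf, Polynomial.coeff_C] using this
    have hv' : v = c * h.coeff 0 := by
      have := congrArg (fun p => Polynomial.coeff p 0) hgh
      simpa [hf, Polynomial.coeff_C] using this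
    exact Polynomial.isUnit_C.mpr (hdvd c ⟨_, hu'⟩ ⟨_, hv'⟩)
  constructor
  · intro hU
    have := Polynomial.natDegree_eq_zero_of_isUnit hU
    omega
  · intro g h hgh
    have hg0 : g ≠ 0 := by rintro rfl; simp at hgh; exact hf0 hgh
    have hh0 : h ≠ 0 := by rintro rfl; simp at hgh; exact hf0 hgh
    have hsum : g.natDegree + h.natDegree = 1 := by
      rw [← Polynomial.natDegree_mul hg0 hh0, ← hgh, hdeg]
    rcases Nat.eq_zero_or_pos g.natDegree with h1 | h1
    · exact Or.inl (key g h hgh h1)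
    · exact Or.inr (key h g (by rw [hgh, mul_comm]) (by omega))

lemma prime_of_equiv {R S : Type*} [CommRing R] [CommRing S] (e : R ≃+* S) {p : R}
    (h : Prime (e p)) : Prime p := by
  rwa [MulEquiv.prime_iff e] at h

/-- Each variable is prime. -/
lemma prime_X_var {n : ℕ} (i : Fin (n + 1)) : Prime (X i : MvPolynomial (Fin (n+1)) K) := by
  apply prime_of_equiv
    ((renameEquiv K (Equiv.swap i 0)).trans (MvPolynomial.finSuccEquiv K n)).toRingEquiv
  have : ((renameEquiv K (Equiv.swap i 0)).trans (MvPolynomial.finSuccEquiv K n)).toRingEquiv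
      (X i) = Polynomial.X := by
    simp [AlgEquiv.coe_ringEquiv, AlgEquiv.trans_apply, renameEquiv_apply, rename_X,
      Equiv.swap_apply_left, finSuccEquiv_X_zero]
  rw [this]
  exact Polynomial.prime_X

lemma X_not_dvd {n : ℕ} {i j : Fin n} (h : i ≠ j) :
    ¬ (X i : MvPolynomial (Fin n) K) ∣ X j := by
  rintro ⟨k, hk⟩
  have := congrArg (eval (fun m => if m = i then (0:K) else 1)) hk
  simp [h.symm] at this

lemma prime_g4 : Prime ((x14:PA K) * y13 - x13 * y14) := by
  set e := (renameEquiv K (Equiv.swap (2 : Fin 16) 0)).trans (MvPolynomial.finSuccEquiv K 15)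
    with he
  apply prime_of_equiv e.toRingEquiv
  have h2 : e.toRingEquiv (X 2 : PA K) = Polynomial.X := by
    simp [he, AlgEquiv.coe_ringEquiv, AlgEquiv.trans_apply, renameEquiv_apply, rename_X,
      Equiv.swap_apply_left, finSuccEquiv_X_zero]
  have hother : ∀ (j : Fin 16) (j' : Fin 15), j ≠ 2 → j ≠ 0 → j = Fin.succ j' →
      e.toRingEquiv (X j : PA K) = Polynomial.C (X j') := by
    intro j j' hj2 hj0 hjs
    subst hjs
    simp [he, AlgEquiv.coe_ringEquiv, AlgEquiv.trans_apply, renameEquiv_apply, rename_X,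
      Equiv.swap_apply_of_ne_of_ne hj2 hj0, finSuccEquiv_X_succ]
  have h7 := hother 7 6 (by decide) (by decide) (by decide)
  have h1 := hother 1 0 (by decide) (by decide) (by decide)
  have h8 := hother 8 7 (by decide) (by decide) (by decide)
  have himg : e.toRingEquiv ((x14:PA K) * y13 - x13 * y14)
      = Polynomial.C (X 6) * Polynomial.X + Polynomial.C (-(X 0 * X 7)) := by
    show e.toRingEquiv ((X 2 : PA K) * X 7 - X 1 * X 8) = _
    rw [map_sub, _root_.map_mul, _root_.map_mul, h2, h7, h1, h8]
    rw [Polynomial.C_neg, Polynomial.C_mul]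
    ring
  rw [himg]
  rw [← UniqueFactorizationMonoid.irreducible_iff_prime]
  apply irreducible_linear (MvPolynomial.X_ne_zero 6)
  intro c hc6 hc07
  have hp6 : Prime (X 6 : MvPolynomial (Fin 15) K) := prime_X_var 6
  rcases hc6 with ⟨d, hd⟩
  rcases hp6.irreducible.isUnit_or_isUnit hd with hu | hu
  · exact hu
  · exfalso
    have hX6c : (X 6 : MvPolynomial (Fin 15) K) ∣ c := by
      rcases hu.exists_right_inv with ⟨d', hd'⟩
      exact ⟨d', by rw [hd, mul_assoc, hd', mul_one]⟩
    have : (X 6 : MvPolynomial (Fin 15) K) ∣ X 0 * X 7 :=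
      (dvd_neg.mp (hX6c.trans hc07))
    rcases hp6.2.2 _ _ this with h' | h'
    · exact X_not_dvd (by decide) h'
    · exact X_not_dvd (by decide) h'


lemma g4_ne_zero : ((x14:PA K) * y13 - x13 * y14) ≠ 0 := prime_g4.ne_zero

lemma g4_not_dvd_g3 : ¬ ((x14:PA K) * y13 - x13 * y14) ∣ (x14 * z123 - x13 * z124) := by
  rintro ⟨k, hk⟩
  have := congrArg (eval (fun m : Fin 16 => if m = 2 ∨ m = 12 then (1:K) else 0)) hk
  simp [x14, x13, y13, y14, z123, z124] at this

/-- The Hilbert–Burch syzygy lemma for the 3x2 matrix of variables. -/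
lemma syz (a b c : PA K)
    (h : (y14*z123 - y13*z124) * a + (x14*z123 - x13*z124) * b + (x14*y13 - x13*y14) * c = 0) :
    ∃ p q : PA K, a = p*x14 + q*x13 ∧ b = -(p*y14) - q*y13 ∧ c = p*z124 + q*z123 := by
  have hg4 : Prime ((x14:PA K) * y13 - x13 * y14) := prime_g4
  have key1 : (a*y13 + b*x13) * ((x14:PA K)*z123 - x13*z124)
      = (a*z123 - c*x13) * (x14*y13 - x13*y14) := by linear_combination x13 * h
  have key2 : (-(a*y14 + b*x14)) * ((x14:PA K)*z123 - x13*z124)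
      = (c*x14 - a*z124) * (x14*y13 - x13*y14) := by linear_combination (-x14) * h
  have hP : ((x14:PA K)*y13 - x13*y14) ∣ (a*y13 + b*x13) := by
    rcases hg4.2.2 (a*y13 + b*x13) ((x14:PA K)*z123 - x13*z124)
        ⟨a*z123 - c*x13, by linear_combination key1⟩ with h1 | h2
    · exact h1
    · exact absurd h2 g4_not_dvd_g3
  have hQ : ((x14:PA K)*y13 - x13*y14) ∣ (-(a*y14 + b*x14)) := by
    rcases hg4.2.2 (-(a*y14 + b*x14)) ((x14:PA K)*z123 - x13*z124)
        ⟨c*x14 - a*z124, by linear_combination key2⟩ with h1 | h2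
    · exact h1
    · exact absurd h2 g4_not_dvd_g3
  obtain ⟨p, hp⟩ := hP
  obtain ⟨q, hq⟩ := hQ
  refine ⟨p, q, ?_, ?_, ?_⟩
  · apply mul_left_cancel₀ g4_ne_zero
    linear_combination x14 * hp + x13 * hq
  · apply mul_left_cancel₀ g4_ne_zero
    linear_combination (-y14) * hp + (-y13) * hq
  · apply mul_left_cancel₀ g4_ne_zero
    linear_combination z124 * hp + z123 * hq + h

/-- Injectivity of the 3x2 matrix of variables (two rows suffice). -/
lemma inj2 (a b : PA K) (h1 : x14*a + x13*b = 0) (h2 : y14*a + y13*b = 0) :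
    a = 0 ∧ b = 0 := by
  have hx13 : Prime (x13 : PA K) := prime_X_var (K := K) (n := 15) 1
  have hdvd : (x13:PA K) ∣ x14 * a := ⟨-b, by linear_combination h1⟩
  rcases hx13.2.2 _ _ hdvd with hx | ha
  · exact absurd hx (X_not_dvd (by decide))
  · obtain ⟨c, rfl⟩ := ha
    have hx13ne : (x13 : PA K) ≠ 0 := hx13.ne_zero
    have hb : b = -(x14 * c) := by
      apply mul_left_cancel₀ hx13ne
      linear_combination h1
    have hc : c * ((x14:PA K)*y13 - x13*y14) = 0 := by
      rw [hb] at h2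
      linear_combination -h2
    rcases mul_eq_zero.mp hc with hc0 | hg
    · subst hc0
      constructor <;> simp [hb]
    · exact absurd hg g4_ne_zero

/-- The evaluation setting z134 to zero. -/
def phi : PA K →ₐ[K] PA K := aeval (fun i => if i = 14 then 0 else X i)

lemma phi_X14 : phi (z134 : PA K) = 0 := by simp [phi, z134]

lemma phi_X_ne (i : Fin 16) (h : i ≠ (14 : Fin 16)) : phi (X i : PA K) = X i := by
  simp [phi, h]

lemma phi_vars :
    phi (x13:PA K) = x13 ∧ phi (x14:PA K) = x14 ∧ phi (y13:PA K) = y13 ∧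
    phi (y14:PA K) = y14 ∧ phi (z123:PA K) = z123 ∧ phi (z124:PA K) = z124 := by
  exact ⟨phi_X_ne 1 (by decide), phi_X_ne 2 (by decide), phi_X_ne 7 (by decide),
    phi_X_ne 8 (by decide), phi_X_ne 12 (by decide), phi_X_ne 13 (by decide)⟩

lemma dvd_sub_phi (f : PA K) : (z134 : PA K) ∣ f - phi f := by
  show (X 14 : PA K) ∣ f - phi f
  induction f using MvPolynomial.induction_on with
  | C a => simp [phi]
  | add f g hf hg =>
    have := dvd_add hf hg
    convert this using 1
    rw [map_add]
    ring
  | mul_X f i hf =>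
    rw [_root_.map_mul]
    by_cases hi : i = (14 : Fin 16)
    · subst hi
      rw [show phi (X (14:Fin 16) : PA K) = 0 from by simp [phi]]
      exact ⟨f, by ring⟩
    · rw [phi_X_ne i hi]
      have := hf.mul_right (X i)
      convert this using 1
      ring

end P1Aux

namespace P1Aux

lemma z134_ne_zero : (z134 : PA K) ≠ 0 := by
  show (X 14 : PA K) ≠ 0
  exact MvPolynomial.X_ne_zero _

end P1Aux

/-- The candidate third differential. -/
def d3Pc : Matrix (Fin 5) (Fin 2) (PA K) := Matrix.of
  ![![z134, 0], ![0, z134], ![x14, x13], ![-y14, -y13], ![z124, z123]]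

/-- A/P1 has a free resolution of length 3 with middle differential d2^{P1};
in particular d1^{P1} * d2^{P1} = 0. -/

theorem P1_resolution :
    (∃ d3P : Matrix (Fin 5) (Fin 2) (PA K),
      Function.Injective d3P.mulVecLin ∧
      Function.Exact d3P.mulVecLin (d2P : Matrix (Fin 4) (Fin 5) (PA K)).mulVecLin ∧
      Function.Exact (d2P : Matrix (Fin 4) (Fin 5) (PA K)).mulVecLin (d1P : Matrix (Fin 1) (Fin 4) (PA K)).mulVecLin ∧
      LinearMap.range ((LinearMap.proj 0 : (Fin 1 → PA K) →ₗ[PA K] PA K).comp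
        (d1P : Matrix (Fin 1) (Fin 4) (PA K)).mulVecLin) = (P1 : Ideal (PA K))) ∧
    d1P * d2P = (0 : Matrix (Fin 1) (Fin 5) (PA K)) := by
  constructor
  · refine ⟨d3Pc, ?_, ?_, ?_, ?_⟩
    · -- injectivity of d3
      intro v w hvw
      have h0 := congrFun hvw 0
      have h1 := congrFun hvw 1
      simp [d3Pc, Matrix.mulVecLin_apply, Matrix.mulVec, dotProduct, Fin.sum_univ_two] at h0 h1
      funext i
      fin_cases i
      · rcases h0 with h | h
        · exact h
        · exact absurd h P1Aux.z134_ne_zero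
      · rcases h1 with h | h
        · exact h
        · exact absurd h P1Aux.z134_ne_zero
    · -- exactness at d3-d2
      intro v
      constructor
      · intro hv
        rw [Matrix.mulVecLin_apply] at hv
        have e0 := congrFun hv 0
        have e1 := congrFun hv 1
        have e2 := congrFun hv 2
        have e3 := congrFun hv 3
        simp [d2P, Matrix.mulVec, dotProduct, Fin.sum_univ_five, Dl] at e0 e1 e2 e3
        obtain ⟨p, q, hA, hB, hC⟩ := P1Aux.syz (v 2) (v 3) (v 4) (by linear_combination e0)
        obtain ⟨h1, h2⟩ := P1Aux.inj2 (v 0 - z134 * p) (v 1 - z134 * q)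
          (by linear_combination e1 + z134 * hA)
          (by linear_combination -e2 - z134 * hB)
        refine ⟨![p, q], ?_⟩
        rw [Matrix.mulVecLin_apply]
        funext i
        fin_cases i <;>
          simp [d3Pc, Matrix.mulVec, dotProduct, Fin.sum_univ_two]
        · linear_combination -h1
        · linear_combination -h2
        · linear_combination -hA
        · linear_combination -hB
        · linear_combination -hC
      · rintro ⟨u, rfl⟩
        rw [Matrix.mulVecLin_apply, Matrix.mulVecLin_apply]
        funext i
        fin_cases i <;>
          simp [d2P, d3Pc, Matrix.mulVec, dotProduct, Fin.sum_univ_five, Fin.sum_univ_two, Dl, Matrix.vecHead, Matrix.vecTail] <;>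
          ring
    · -- exactness at d2-d1
      intro w
      constructor
      · intro hv
        rw [Matrix.mulVecLin_apply] at hv
        have e0 := congrFun hv 0
        simp [d1P, Matrix.mulVec, dotProduct, Fin.sum_univ_four, Dl] at e0
        have E0 : z134 * w 0 + (y14*z123 - y13*z124) * w 1 + (x14*z123 - x13*z124) * w 2
            + (x14*y13 - x13*y14) * w 3 = 0 := by linear_combination e0
        obtain ⟨hv1, hv2, hv3, hv4, hv5, hv6⟩ := P1Aux.phi_vars (K := K)
        have hbar : (y14*z123 - y13*z124) * P1Aux.phi (w 1)
            + (x14*z123 - x13*z124) * P1Aux.phi (w 2)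
            + (x14*y13 - x13*y14) * P1Aux.phi (w 3) = 0 := by
          have := congrArg P1Aux.phi E0
          simp only [map_add, _root_.map_mul, map_sub, map_zero, P1Aux.phi_X14,
            hv1, hv2, hv3, hv4, hv5, hv6] at this
          linear_combination this
        obtain ⟨p, q, hA, hB, hC⟩ := P1Aux.syz _ _ _ hbar
        obtain ⟨u1, hu1⟩ := P1Aux.dvd_sub_phi (w 1)
        obtain ⟨u2, hu2⟩ := P1Aux.dvd_sub_phi (w 2)
        obtain ⟨u3, hu3⟩ := P1Aux.dvd_sub_phi (w 3)
        have hw0 : w 0 + ((y14*z123 - y13*z124) * u1 + (x14*z123 - x13*z124) * u2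
            + (x14*y13 - x13*y14) * u3) = 0 := by
          apply mul_left_cancel₀ P1Aux.z134_ne_zero
          rw [mul_zero]
          linear_combination E0 - hbar - (y14*z123 - y13*z124) * hu1
            - (x14*z123 - x13*z124) * hu2 - (x14*y13 - x13*y14) * hu3
        refine ⟨![p, q, -u1, -u2, -u3], ?_⟩
        rw [Matrix.mulVecLin_apply]
        funext i
        fin_cases i <;>
          simp [d2P, Matrix.mulVec, dotProduct, Fin.sum_univ_five, Dl]
        · linear_combination -hw0
        · linear_combination -hA - hu1
        · linear_combination -hB - hu2
        · linear_combination -hC - hu3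
      · rintro ⟨u, rfl⟩
        rw [Matrix.mulVecLin_apply, Matrix.mulVecLin_apply]
        funext i
        fin_cases i <;>
          simp [d2P, d1P, Matrix.mulVec, dotProduct, Fin.sum_univ_five, Fin.sum_univ_four, Dl, Matrix.vecHead, Matrix.vecTail] <;>
          ring
    · -- range of d1 is P1
      apply le_antisymm
      · rintro s ⟨w, rfl⟩
        simp only [LinearMap.comp_apply, Matrix.mulVecLin_apply, LinearMap.proj_apply]
        have E : (d1P.mulVec w) 0 = z134 * w 0 + (y14*z123 - y13*z124) * w 1
            + (x14*z123 - x13*z124) * w 2 + (Dl x14 y14 x13 y13) * w 3 := by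
          simp [d1P, Matrix.mulVec, dotProduct, Fin.sum_univ_four]
        rw [E]
        show _ ∈ Ideal.span _
        refine add_mem (add_mem (add_mem ?_ ?_) ?_) ?_
        · exact Ideal.mul_mem_right _ _ (Ideal.subset_span (Set.mem_insert _ _))
        · exact Ideal.mul_mem_right _ _ (Ideal.subset_span
            (Set.mem_insert_of_mem _ (Set.mem_insert _ _)))
        · exact Ideal.mul_mem_right _ _ (Ideal.subset_span
            (Set.mem_insert_of_mem _ (Set.mem_insert_of_mem _ (Set.mem_insert _ _))))
        · exact Ideal.mul_mem_right _ _ (Ideal.subset_span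
            (Set.mem_insert_of_mem _ (Set.mem_insert_of_mem _
              (Set.mem_insert_of_mem _ rfl))))
      · show Ideal.span _ ≤ _
        rw [Ideal.span_le]
        rintro g (rfl | rfl | rfl | rfl)
        · exact LinearMap.mem_range.mpr ⟨![1, 0, 0, 0], by
            simp [d1P, Matrix.mulVec, dotProduct, Fin.sum_univ_four, Dl]⟩
        · exact LinearMap.mem_range.mpr ⟨![0, 1, 0, 0], by
            simp [d1P, Matrix.mulVec, dotProduct, Fin.sum_univ_four, Dl]⟩
        · exact LinearMap.mem_range.mpr ⟨![0, 0, 1, 0], by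
            simp [d1P, Matrix.mulVec, dotProduct, Fin.sum_univ_four, Dl]⟩
        · exact LinearMap.mem_range.mpr ⟨![0, 0, 0, 1], by
            simp [d1P, Matrix.mulVec, dotProduct, Fin.sum_univ_four, Dl]⟩
  · apply Matrix.ext
    intro i j
    change (∑ k, d1P i k * d2P k j) = 0
    fin_cases i <;> fin_cases j <;>
      simp [d1P, d2P, Matrix.mul_apply, Fin.sum_univ_four, Dl, Matrix.vecHead, Matrix.vecTail] <;>
      ring
end
end
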